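/- If E and Ẽ are fibrewise spaces over B that are fibrewise homotopy equivalent, then TC_{B,r}(E) = TC_{B,r}(Ẽ). -/

import Mathlib

open Set

/-- Two continuous maps are fibrewise homotopic over `B`: there is a homotopy
whose every time-slice commutes with the projections to `B`. -/
def FibHomotopic {B X Y : Type*} [TopologicalSpace B] [TopologicalSpace X] [TopologicalSpace Y]
    (pX : X → B) (pY : Y → B) (f g : C(X, Y)) : Prop :=
  ∃ H : f.Homotopy g, ∀ (x : X) (t : unitInterval), pY (H (t, x)) = pX x

/-- Sequential parametrized homotopic distance of a family of fibrewise maps: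
the least `n` such that `X` admits an open cover by `n + 1` open sets on each of
which all the maps are pairwise fibrewise homotopic (`∞` if none exists). -/
noncomputable def fibDist {B X Y ι : Type*} [TopologicalSpace B] [TopologicalSpace X]
    [TopologicalSpace Y] (pX : X → B) (pY : Y → B) (f : ι → C(X, Y)) : ℕ∞ :=
  sInf {n : ℕ∞ | ∃ k : ℕ, (k : ℕ∞) = n ∧ ∃ U : Fin (k + 1) → Set X,
    (∀ i, IsOpen (U i)) ∧ (⋃ i, U i) = Set.univ ∧
    ∀ i s t, FibHomotopic (fun x : U i => pX (x : X)) pY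
      ((f s).restrict (U i)) ((f t).restrict (U i))}

/-- Fibrewise sectional category of a fibrewise map `f : E → X` over `B`: the least `k`
such that `X` has an open cover by `k + 1` open sets, each admitting a fibrewise map
`s : U → E` with `f ∘ s` fibrewise homotopic to the inclusion. -/
noncomputable def fibSecat {B E X : Type*} [TopologicalSpace B] [TopologicalSpace E]
    [TopologicalSpace X] (pE : E → B) (pX : X → B) (f : C(E, X)) : ℕ∞ :=
  sInf {n : ℕ∞ | ∃ k : ℕ, (k : ℕ∞) = n ∧ ∃ U : Fin (k + 1) → Set X,
    (∀ i, IsOpen (U i)) ∧ (⋃ i, U i) = Set.univ ∧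
    ∀ i, ∃ s : C(U i, E), (∀ x : U i, pE (s x) = pX (x : X)) ∧
      FibHomotopic (fun x : U i => pX (x : X)) pX (f.comp s)
        ⟨Subtype.val, continuous_subtype_val⟩}

/-- The fibrewise free path space of `Y` over `B`: pairs `(b, γ)` with `p_Y ∘ γ`
constant at `b`. -/
abbrev FibPathSpace {B Y : Type*} [TopologicalSpace B] [TopologicalSpace Y] (pY : Y → B) :
    Type _ := {z : B × C(unitInterval, Y) // ∀ t, pY (z.2 t) = z.1}

/-- The `r`-fold fibred product of `Y` over `B`. -/
abbrev FibPow {B Y : Type*} [TopologicalSpace B] [TopologicalSpace Y] (pY : Y → B) (r : ℕ) :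
    Type _ := {v : Fin r → Y // ∀ i j, pY (v i) = pY (v j)}

/-- The time `i / (r - 1)` in the unit interval. -/
noncomputable def evalTime (r : ℕ) (i : Fin r) : unitInterval :=
  ⟨(i : ℝ) / ((r : ℝ) - 1), by
    have h1 : 1 ≤ r := Nat.one_le_iff_ne_zero.mpr (by rintro rfl; exact i.elim0)
    have h0 : (0:ℝ) ≤ (r:ℝ) - 1 := by
      have : (1:ℝ) ≤ (r:ℝ) := by exact_mod_cast h1
      linarith
    have hi : (i:ℝ) ≤ (r:ℝ) - 1 := by
      have h2 : ((i:ℕ):ℝ) ≤ ((r - 1 : ℕ):ℝ) := Nat.cast_le.mpr (by omega)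
      rwa [Nat.cast_sub h1, Nat.cast_one] at h2
    exact ⟨div_nonneg (by positivity) h0, div_le_one_of_le₀ hi h0⟩⟩

/-- The fibrewise evaluation fibration `Π_{r,Y} : P_B(Y) → Y_B^r`, sending `(b, γ)` to
`(γ(0), γ(1/(r-1)), …, γ(1))`. -/
noncomputable def fibPi {B Y : Type*} [TopologicalSpace B] [TopologicalSpace Y] (pY : Y → B)
    (r : ℕ) : C(FibPathSpace pY, FibPow pY r) :=
  ⟨fun z => ⟨fun i => z.1.2 (evalTime r i),
      fun i j => (z.2 (evalTime r i)).trans (z.2 (evalTime r j)).symm⟩, by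
    apply Continuous.subtype_mk
    exact continuous_pi fun i =>
      (continuous_eval_const (evalTime r i)).comp
        (continuous_snd.comp continuous_subtype_val)⟩

/-- The `i`-th projection `Y_B^r → Y`. -/
def fibPrj {B Y : Type*} [TopologicalSpace B] [TopologicalSpace Y] (pY : Y → B) (r : ℕ)
    (i : Fin r) : C(FibPow pY r, Y) :=
  ⟨fun v => v.1 i, ((continuous_apply i).comp continuous_subtype_val)⟩

/-- Fibrewise homotopy equivalence of two fibrewise spaces over `B`. -/
def FibHtpyEquiv {B E E' : Type*} [TopologicalSpace B] [TopologicalSpace E] [TopologicalSpace E']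
    (pE : E → B) (pE' : E' → B) : Prop :=
  ∃ (f : C(E, E')) (g : C(E', E)), (∀ x, pE' (f x) = pE x) ∧ (∀ x, pE (g x) = pE' x) ∧
    FibHomotopic pE pE (g.comp f) (ContinuousMap.id E) ∧
    FibHomotopic pE' pE' (f.comp g) (ContinuousMap.id E')

section Aux

variable {B W X Y Z : Type*} [TopologicalSpace B] [TopologicalSpace W] [TopologicalSpace X]
  [TopologicalSpace Y] [TopologicalSpace Z]

lemma FibHomotopic.trans' {pX : X → B} {pY : Y → B} {f g h : C(X, Y)}
    (h1 : FibHomotopic pX pY f g) (h2 : FibHomotopic pX pY g h) : FibHomotopic pX pY f h := by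
  obtain ⟨H, hH⟩ := h1
  obtain ⟨K, hK⟩ := h2
  refine ⟨H.trans K, fun x t => ?_⟩
  rw [ContinuousMap.Homotopy.trans_apply]
  split_ifs
  · exact hH x _
  · exact hK x _

lemma FibHomotopic.postcomp {pX : X → B} {pY : Y → B} {pZ : Z → B} {f g : C(X, Y)}
    (φ : C(Y, Z)) (hφ : ∀ y, pZ (φ y) = pY y) (h : FibHomotopic pX pY f g) :
    FibHomotopic pX pZ (φ.comp f) (φ.comp g) := by
  obtain ⟨H, hH⟩ := h
  refine ⟨⟨⟨fun p => φ (H p), φ.continuous.comp H.continuous⟩,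
    fun x => by simp, fun x => by simp⟩, fun x t => (hφ _).trans (hH x t)⟩

lemma FibHomotopic.precomp {pW : W → B} {pX : X → B} {pY : Y → B} {f g : C(X, Y)}
    (ψ : C(W, X)) (hψ : ∀ w, pX (ψ w) = pW w) (h : FibHomotopic pX pY f g) :
    FibHomotopic pW pY (f.comp ψ) (g.comp ψ) := by
  obtain ⟨H, hH⟩ := h
  refine ⟨⟨⟨fun p => H (p.1, ψ p.2),
    H.continuous.comp (continuous_fst.prodMk (ψ.continuous.comp continuous_snd))⟩,
    fun x => by simp, fun x => by simp⟩, fun w t => (hH (ψ w) t).trans (hψ w)⟩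

/-- Coordinatewise application of a fibrewise map to the fibred power. -/
def fibPowMap {pX : X → B} {pY : Y → B} (f : C(X, Y)) (hf : ∀ x, pY (f x) = pX x) (r : ℕ) :
    C(FibPow pX r, FibPow pY r) :=
  ⟨fun v => ⟨fun j => f (v.1 j), fun i j => by rw [hf, hf]; exact v.2 i j⟩, by
    apply Continuous.subtype_mk
    exact continuous_pi fun j => f.continuous.comp
      ((continuous_apply j).comp continuous_subtype_val)⟩

/-- Postcomposition of fibrewise paths with a fibrewise map. -/
def fibPathMap {pX : X → B} {pY : Y → B} (g : C(Y, X)) (hg : ∀ y, pX (g y) = pY y) :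
    C(FibPathSpace pY, FibPathSpace pX) :=
  ⟨fun z => ⟨(z.1.1, g.comp z.1.2), fun t => by
      simp only [ContinuousMap.comp_apply]; rw [hg]; exact z.2 t⟩, by
    apply Continuous.subtype_mk
    exact ((continuous_fst.comp continuous_subtype_val).prodMk
      ((ContinuousMap.continuous_postcomp g).comp (continuous_snd.comp continuous_subtype_val)))⟩

/-- A fibrewise homotopy induces one coordinatewise on the fibred power. -/
lemma fibPowHomotopic {pX : X → B} {f g : C(X, X)} (hf : ∀ x, pX (f x) = pX x)
    (hg : ∀ x, pX (g x) = pX x) (h : FibHomotopic pX pX f g) (r : ℕ) [NeZero r] :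
    FibHomotopic (fun v : FibPow pX r => pX (v.1 0)) (fun v : FibPow pX r => pX (v.1 0))
      (fibPowMap f hf r) (fibPowMap g hg r) := by
  obtain ⟨H, hH⟩ := h
  refine ⟨⟨⟨fun p => ⟨fun j => H (p.1, p.2.1 j), fun i j => by
      rw [hH, hH]; exact p.2.2 i j⟩, ?_⟩, fun v => ?_, fun v => ?_⟩, fun v t => hH _ t⟩
  · apply Continuous.subtype_mk
    exact continuous_pi fun j => H.continuous.comp
      (continuous_fst.prodMk ((continuous_apply j).comp
        (continuous_subtype_val.comp continuous_snd)))
  · exact Subtype.ext (funext fun j => H.apply_zero _)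
  · exact Subtype.ext (funext fun j => H.apply_one _)

lemma fibSecat_fibPi_le {B E E' : Type*} [TopologicalSpace B] [TopologicalSpace E]
    [TopologicalSpace E'] (r : ℕ) [NeZero r] (pE : E → B) (pE' : E' → B)
    (heq : FibHtpyEquiv pE pE') :
    fibSecat (fun z : FibPathSpace pE => z.1.1) (fun v : FibPow pE r => pE (v.1 0))
        (fibPi pE r) ≤
      fibSecat (fun z : FibPathSpace pE' => z.1.1) (fun v : FibPow pE' r => pE' (v.1 0))
        (fibPi pE' r) := by
  obtain ⟨f, g, hf, hg, Hgf, _⟩ := heq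
  apply sInf_le_sInf
  rintro n ⟨k, hk, U, hopen, hcover, hsec⟩
  let F : C(FibPow pE r, FibPow pE' r) := fibPowMap f hf r
  let G : C(FibPow pE' r, FibPow pE r) := fibPowMap g hg r
  refine ⟨k, hk, fun i => F ⁻¹' (U i),
    fun i => (hopen i).preimage F.continuous, ?_, ?_⟩
  · ext v
    simp only [Set.mem_iUnion, Set.mem_preimage, Set.mem_univ, iff_true]
    have h : F v ∈ ⋃ i, U i := hcover ▸ Set.mem_univ _
    exact Set.mem_iUnion.mp h
  · intro i
    obtain ⟨s, hs, hsh⟩ := hsec i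
    set V : Set (FibPow pE r) := F ⁻¹' (U i) with hV
    let ρ : C(V, U i) := ⟨fun v => ⟨F v.1, v.2⟩,
      Continuous.subtype_mk (F.continuous.comp continuous_subtype_val) _⟩
    have hρ : ∀ w : V, pE' (((ρ w : FibPow pE' r)).1 0) = pE ((w : FibPow pE r).1 0) :=
      fun w => hf _
    have hG : ∀ w : FibPow pE' r, pE ((G w).1 0) = pE' (w.1 0) := fun w => hg _
    refine ⟨(fibPathMap g hg).comp (s.comp ρ), fun x => ?_, ?_⟩
    · exact (hs (ρ x)).trans (hf _)
    · have eq1 : (fibPi pE r).comp ((fibPathMap g hg).comp (s.comp ρ)) =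
          G.comp (((fibPi pE' r).comp s).comp ρ) := by
        ext v j
        rfl
      have h1 : FibHomotopic (fun x : V => pE ((x : FibPow pE r).1 0))
          (fun v : FibPow pE r => pE (v.1 0))
          (G.comp (((fibPi pE' r).comp s).comp ρ))
          (G.comp ((⟨Subtype.val, continuous_subtype_val⟩ : C(U i, FibPow pE' r)).comp ρ)) :=
        FibHomotopic.postcomp G hG (FibHomotopic.precomp ρ hρ hsh)
      have hgf : ∀ x, pE ((g.comp f) x) = pE x := fun x => (hg _).trans (hf _)
      have hid : ∀ x, pE ((ContinuousMap.id E) x) = pE x := fun _ => rfl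
      have h2' := fibPowHomotopic hgf hid Hgf r
      have h2 : FibHomotopic (fun x : V => pE ((x : FibPow pE r).1 0))
          (fun v : FibPow pE r => pE (v.1 0))
          ((fibPowMap (g.comp f) hgf r).comp
            (⟨Subtype.val, continuous_subtype_val⟩ : C(V, FibPow pE r)))
          ((fibPowMap (ContinuousMap.id E) hid r).comp
            (⟨Subtype.val, continuous_subtype_val⟩ : C(V, FibPow pE r))) :=
        FibHomotopic.precomp _ (fun w => rfl) h2'
      have eq2 : G.comp ((⟨Subtype.val, continuous_subtype_val⟩ : C(U i, FibPow pE' r)).comp ρ) =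
          (fibPowMap (g.comp f) hgf r).comp
            (⟨Subtype.val, continuous_subtype_val⟩ : C(V, FibPow pE r)) := by
        ext v j
        rfl
      have eq3 : (fibPowMap (ContinuousMap.id E) hid r).comp
          (⟨Subtype.val, continuous_subtype_val⟩ : C(V, FibPow pE r)) =
          (⟨Subtype.val, continuous_subtype_val⟩ : C(V, FibPow pE r)) := by
        ext v j
        rfl
      rw [eq1]
      refine FibHomotopic.trans' h1 ?_
      rw [eq2, ← eq3]
      exact h2

lemma FibHtpyEquiv.symm' {B E E' : Type*} [TopologicalSpace B] [TopologicalSpace E]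
    [TopologicalSpace E'] {pE : E → B} {pE' : E' → B} (h : FibHtpyEquiv pE pE') :
    FibHtpyEquiv pE' pE := by
  obtain ⟨f, g, hf, hg, H1, H2⟩ := h
  exact ⟨g, f, hg, hf, H2, H1⟩

end Aux

/-- Fibrewise homotopy equivalent spaces have the same sequential parametrized
topological complexity. -/
theorem stmt18 {B E E' : Type*} [TopologicalSpace B] [TopologicalSpace E] [TopologicalSpace E']
    (r : ℕ) [NeZero r] (hr : 2 ≤ r) (pE : E → B) (pE' : E' → B)
    (hpE : Continuous pE) (hpE' : Continuous pE')
    (heq : FibHtpyEquiv pE pE') :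
    fibSecat (fun z : FibPathSpace pE => z.1.1) (fun v : FibPow pE r => pE (v.1 0))
        (fibPi pE r) =
      fibSecat (fun z : FibPathSpace pE' => z.1.1) (fun v : FibPow pE' r => pE' (v.1 0))
        (fibPi pE' r) := by
  exact le_antisymm (fibSecat_fibPi_le r pE pE' heq) (fibSecat_fibPi_le r pE' pE heq.symm')
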